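/- arXiv:nlin/0101051 — 7 statements merged into one kernel-verified Lean document; each statement's English description precedes it below -/
import Mathlib

section
/- Let K ≥ 1 and let X be an n-periodic configuration with density ρ = m(X,1,n)/n. Then for every x ∈ ℤ and every positive integer N, |m(X,x+1,x+N)/N − ρ| ≤ ρ(1 − ρ/K)·n/N. In particular, if 0 < ρ < K then X is (ρ,φ)-regular with the rate function φ(N) = ρ(1 − ρ/K)·n/N. -/
/-- A configuration on the `K`-lane road: at most `K` particles per site. -/
def IsConf (K : ℤ) (X : ℤ → ℤ) : Prop := ∀ x, 0 ≤ X x ∧ X x ≤ K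

/-- A configuration is `n`-periodic if `X(x+n) = X(x)` for all `x`. -/
def IsPeriodic (n : ℤ) (X : ℤ → ℤ) : Prop := ∀ x, X (x + n) = X x

/-- The number of particles `m(X,a,b) = Σ_{x=a}^{b} X(x)`. -/
noncomputable def msum (X : ℤ → ℤ) (a b : ℤ) : ℤ := ∑ x ∈ Finset.Icc a b, X x

/-- `X` is `(ρ,φ)`-regular: every window of length `N` has particle density
within `φ(N)` of `ρ`. -/
def IsRegularConf (ρ : ℝ) (φ : ℕ → ℝ) (X : ℤ → ℤ) : Prop :=
  ∀ (n : ℤ) (N : ℕ), 1 ≤ N → |(msum X (n + 1) (n + N) : ℝ) / N - ρ| ≤ φ N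

open Finset

lemma ioc_bounds {K : ℤ} {X : ℤ → ℤ} (hX : ∀ x, 0 ≤ X x ∧ X x ≤ K) {a b : ℤ} (hab : a ≤ b) :
    0 ≤ ∑ x ∈ Ioc a b, X x ∧ (∑ x ∈ Ioc a b, X x) ≤ (b - a) * K := by
  constructor
  · exact Finset.sum_nonneg fun x _ => (hX x).1
  · calc ∑ x ∈ Ioc a b, X x ≤ ∑ _x ∈ Ioc a b, K :=
        Finset.sum_le_sum fun x _ => (hX x).2
    _ = (b - a) * K := by
        rw [Finset.sum_const, Int.card_Ioc, nsmul_eq_mul]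
        have : ((b - a).toNat : ℤ) = b - a := by omega
        rw [this]


lemma ioc_split (f : ℤ → ℤ) {a b c : ℤ} (hab : a ≤ b) (hbc : b ≤ c) :
    ∑ x ∈ Ioc a c, f x = (∑ x ∈ Ioc a b, f x) + ∑ x ∈ Ioc b c, f x := by
  have hd : Disjoint (Ioc a b) (Ioc b c) := by
    rw [Finset.disjoint_left]; intro x hx hx'; simp at hx hx'; omega
  rw [← Finset.sum_union hd, Finset.Ioc_union_Ioc_eq_Ioc hab hbc]

lemma ioc_single (f : ℤ → ℤ) (a : ℤ) : ∑ x ∈ Ioc a (a + 1), f x = f (a + 1) := by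
  have : Ioc a (a+1) = {a+1} := by ext y; simp; omega
  rw [this, Finset.sum_singleton]

/-- Window invariance: any length-`n` window has the same sum. -/
lemma window_sum {n : ℤ} (hn : 1 ≤ n) {X : ℤ → ℤ} (hper : ∀ x, X (x + n) = X x)
    (a : ℤ) : ∑ x ∈ Ioc a (a + n), X x = ∑ x ∈ Ioc 0 n, X x := by
  induction a using Int.induction_on with
  | zero => simp
  | succ a ih =>
      have h1 : ∑ x ∈ Ioc (a:ℤ) (a + 1 + n), X x
          = X (a + 1) + ∑ x ∈ Ioc (a + 1 : ℤ) (a + 1 + n), X x := by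
        rw [ioc_split X (by omega : (a:ℤ) ≤ a + 1) (by omega), ioc_single]
      have h2 : ∑ x ∈ Ioc (a:ℤ) (a + 1 + n), X x
          = (∑ x ∈ Ioc (a:ℤ) (a + n), X x) + X (a + 1) := by
        rw [ioc_split X (by omega : (a:ℤ) ≤ a + n) (by omega)]
        have : (a:ℤ) + 1 + n = (a + n) + 1 := by ring
        rw [this, ioc_single]
        have : (a:ℤ) + n + 1 = (a + 1) + n := by ring
        rw [this, hper]
      have := h1.symm.trans h2
      omega
  | pred a ih =>
      have h1 : ∑ x ∈ Ioc (-(a:ℤ) - 1) (-(a:ℤ) - 1 + n), X x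
          = X (-(a:ℤ)) + ∑ x ∈ Ioc (-(a:ℤ)) (-(a:ℤ) - 1 + n), X x := by
        rw [ioc_split X (by omega : (-(a:ℤ) - 1) ≤ -(a:ℤ) - 1 + 1) (by omega)]
        have : (-(a:ℤ) - 1) + 1 = -(a:ℤ) := by ring
        rw [← this, ioc_single]
        norm_num
      have h2 : ∑ x ∈ Ioc (-(a:ℤ)) (-(a:ℤ) + n), X x
          = (∑ x ∈ Ioc (-(a:ℤ)) (-(a:ℤ) - 1 + n), X x) + X (-(a:ℤ)) := by
        rw [ioc_split X (by omega : -(a:ℤ) ≤ -(a:ℤ) - 1 + n) (by omega)]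
        have e : -(a:ℤ) + n = (-(a:ℤ) - 1 + n) + 1 := by ring
        rw [e, ioc_single]
        have e2 : -(a:ℤ) - 1 + n + 1 = (-(a:ℤ) - 1 + 1) + n := by ring
        rw [e2, hper]
        norm_num
      rw [ih] at h2
      omega

/-- `q` full periods sum to `q·S`. -/
lemma periods_sum {n : ℤ} (hn : 1 ≤ n) {X : ℤ → ℤ} (hper : ∀ x, X (x + n) = X x)
    (q : ℕ) (a : ℤ) :
    ∑ x ∈ Ioc a (a + q * n), X x = q * ∑ x ∈ Ioc 0 n, X x := by
  induction q generalizing a with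
  | zero => simp
  | succ q ih =>
      have : (a:ℤ) + (q + 1 : ℕ) * n = (a + n) + q * n := by push_cast; ring
      rw [this, ioc_split X (by omega : a ≤ a + n) (by nlinarith [Int.natCast_nonneg q] : (a:ℤ) + n ≤ a + n + q * n),
        window_sum hn hper a, ih]
      push_cast; ring

lemma key_int {K n r S P : ℤ} (hK : 1 ≤ K) (hn : 1 ≤ n) (hr0 : 0 ≤ r) (hrn : r ≤ n)
    (hP0 : 0 ≤ P) (hPr : P ≤ r * K) (hSP : P ≤ S) (hSP2 : S - P ≤ (n - r) * K) :
    |n * K * P - r * K * S| ≤ S * (n * K - S) := by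
  have hS0 : 0 ≤ S := le_trans hP0 hSP
  have hSnK : S ≤ n * K := by nlinarith
  rw [abs_le]
  constructor
  · rcases le_total S ((n - r) * K) with h | h
    · nlinarith
    · nlinarith
  · rcases le_total (r * K) S with h | h
    · nlinarith
    · nlinarith

lemma msum_ioc (X : ℤ → ℤ) (a b : ℤ) : msum X (a + 1) b = ∑ x ∈ Ioc a b, X x := by
  unfold msum; congr 1; ext y; simp

/-- An `n`-periodic configuration of density `ρ` is `(ρ,φ)`-regular with the
rate function `φ(N) = ρ(1-ρ/K)·n/N`. -/
theorem stmt_1 (K n : ℤ) (hK : 1 ≤ K) (hn : 1 ≤ n) (X : ℤ → ℤ)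
    (hX : IsConf K X) (hper : IsPeriodic n X) (ρ : ℝ)
    (hρ : ρ = (msum X 1 n : ℝ) / n) :
    (∀ (x : ℤ) (N : ℕ), 1 ≤ N →
        |(msum X (x + 1) (x + N) : ℝ) / N - ρ| ≤ ρ * (1 - ρ / K) * n / N) ∧
    (0 < ρ → ρ < K →
        IsRegularConf ρ (fun N : ℕ => ρ * (1 - ρ / K) * n / N) X) := by
  have main : ∀ (x : ℤ) (N : ℕ), 1 ≤ N →
      |(msum X (x + 1) (x + N) : ℝ) / N - ρ| ≤ ρ * (1 - ρ / K) * n / N := by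
    intro x N hN
    set S : ℤ := ∑ y ∈ Ioc 0 n, X y with hSdef
    have hρS : ρ = (S : ℝ) / n := by
      rw [hρ]; congr 2
      exact_mod_cast (msum_ioc X 0 n).trans rfl
    set q : ℤ := (N : ℤ) / n with hq
    set r : ℤ := (N : ℤ) % n with hr
    have hq0 : 0 ≤ q := Int.ediv_nonneg (by positivity) (by omega)
    have hr0 : 0 ≤ r := Int.emod_nonneg _ (by omega)
    have hrn : r < n := Int.emod_lt_of_pos _ (by omega)
    have hNqr : (N : ℤ) = q * n + r := by
      rw [hq, hr]; rw [mul_comm]; exact (Int.mul_ediv_add_emod _ _).symm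
    set b : ℤ := x + q * n with hb
    set P : ℤ := ∑ y ∈ Ioc b (b + r), X y with hP
    have hWsplit : msum X (x + 1) (x + N) = q * S + P := by
      rw [msum_ioc]
      have h1 : x + (N : ℤ) = b + r := by rw [hb, hNqr]; ring
      rw [h1, ioc_split X (by nlinarith : x ≤ b) (by omega : b ≤ b + r)]
      have hqt : ((q.toNat : ℤ)) = q := Int.toNat_of_nonneg hq0
      have h2 : (b : ℤ) = x + (q.toNat : ℤ) * n := by rw [hqt]
      rw [h2, periods_sum hn hper, hqt]
    -- bounds
    have hPb := ioc_bounds hX (by omega : b ≤ b + r)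
    have hPr : P ≤ r * K := by have := hPb.2; simpa using this
    have hP0 : 0 ≤ P := hPb.1
    have hw := window_sum hn hper b
    rw [ioc_split X (by omega : b ≤ b + r) (by omega : b + r ≤ b + n), ← hSdef, ← hP] at hw
    have htb := ioc_bounds hX (by omega : b + r ≤ b + n)
    have hSP : P ≤ S := by have := htb.1; omega
    have hSP2 : S - P ≤ (n - r) * K := by
      have := htb.2
      have e : (b + n) - (b + r) = n - r := by ring
      rw [e] at this; omega
    have key := key_int hK hn hr0 (le_of_lt hrn) hP0 hPr hSP hSP2
    -- to reals
    have hn' : (0:ℝ) < (n:ℝ) := by exact_mod_cast hn.trans_lt' (by norm_num)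
    have hK' : (0:ℝ) < (K:ℝ) := by exact_mod_cast hK.trans_lt' (by norm_num)
    have hN' : (0:ℝ) < (N:ℝ) := by exact_mod_cast hN.trans_lt' (by norm_num)
    have keyR : |(n:ℝ) * K * P - r * K * S| ≤ (S:ℝ) * (n * K - S) := by
      exact_mod_cast key
    have hNR : (N:ℝ) = q * n + r := by exact_mod_cast hNqr
    have hWR : ((msum X (x + 1) (x + N) : ℤ) : ℝ) = q * S + P := by exact_mod_cast hWsplit
    have e1 : (msum X (x + 1) (x + N) : ℝ) / N - ρ = ((n:ℝ) * P - r * S) / ((n:ℝ) * N) := by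
      rw [hρS, hWR, div_sub_div _ _ (ne_of_gt hN') (ne_of_gt hn'),
        div_eq_div_iff (by positivity) (by positivity)]
      rw [hNR]; ring
    have e2 : ρ * (1 - ρ / K) * n / N = ((S:ℝ) * (n * K - S)) / ((n:ℝ) * K * N) := by
      rw [hρS]; field_simp
    rw [e1, e2, abs_div, abs_of_pos (by positivity : (0:ℝ) < (n:ℝ) * N),
      div_le_div_iff₀ (by positivity) (by positivity)]
    have habs : |(n:ℝ) * P - r * S| * K ≤ (S:ℝ) * (n * K - S) := by
      calc |(n:ℝ) * P - r * S| * K = |((n:ℝ) * P - r * S) * K| := by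
            rw [abs_mul, abs_of_pos hK']
        _ = |(n:ℝ) * K * P - r * K * S| := by ring_nf
        _ ≤ _ := keyR
    nlinarith [mul_le_mul_of_nonneg_right habs (le_of_lt (mul_pos hn' hN')), abs_nonneg ((n:ℝ) * P - r * S)]
  exact ⟨main, fun _ _ => main⟩
end

section
/- Let K ≥ 1. If a configuration X is (ρ,φ)-regular, then the configuration TX is also (ρ,φ)-regular. (In fact, for every n ∈ ℤ and every positive integer N, the number m(TX,n+1,n+N) lies between m(X,n,n+N−1) and m(X,n+2,n+N+1).) -/
/-- The traffic map `T`. -/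
def Tmap (K : ℤ) (X : ℤ → ℤ) : ℤ → ℤ := fun x =>
  X x + min (X (x - 1)) (K - X x) - min (X x) (K - X (x + 1))

lemma sum_Icc_top (a b : ℤ) (h : a ≤ b + 1) (f : ℤ → ℤ) :
    ∑ k ∈ Finset.Icc a (b+1), f k = ∑ k ∈ Finset.Icc a b, f k + f (b+1) := by
  have e : Finset.Icc a (b+1) = insert (b+1) (Finset.Icc a b) := by
    ext x; simp [Finset.mem_Icc]; omega
  rw [e, Finset.sum_insert (by simp [Finset.mem_Icc])]
  ring

lemma telesum (g : ℤ → ℤ) (a : ℤ) (N : ℕ) :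
    ∑ x ∈ Finset.Icc (a+1) (a+(N:ℤ)), (g (x-1) - g x) = g a - g (a+(N:ℤ)) := by
  induction N with
  | zero => simp
  | succ n ih =>
      have e : (a + ((n:ℕ)+1 : ℕ) : ℤ) = (a + n) + 1 := by push_cast; ring
      rw [e, sum_Icc_top _ _ (by omega), ih]
      have : a + (n:ℤ) + 1 - 1 = a + n := by ring
      rw [this]; ring

lemma key (K : ℤ) (X : ℤ → ℤ) (n : ℤ) (N : ℕ) :
    msum X n (n + N - 1) =
        msum X (n+1) (n+N) + (X n - X (n + N)) ∧
    msum X (n + 2) (n + N + 1) =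
        msum X (n+1) (n+N) + (X (n + N + 1) - X (n + 1)) ∧
    msum (Tmap K X) (n + 1) (n + N) =
        msum X (n+1) (n+N) + (min (X n) (K - X (n+1)) - min (X (n+N)) (K - X (n+N+1))) := by
  have shiftsum : ∀ (g : ℤ → ℤ) (a b : ℤ),
      ∑ x ∈ Finset.Icc (a+1) (b+1), g (x-1) = ∑ x ∈ Finset.Icc a b, g x := by
    intro g a b
    rw [← Finset.map_add_right_Icc a b 1, Finset.sum_map]
    simp [addRightEmbedding]
  refine ⟨?_, ?_, ?_⟩
  · have h1 : msum X n (n + N - 1) = ∑ x ∈ Finset.Icc (n+1) (n+N), X (x-1) := by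
      have : (n : ℤ) + N = (n + N - 1) + 1 := by ring
      rw [msum, this, shiftsum]
      have e : n + (N:ℤ) - 1 + 1 - 1 = n + N - 1 := by ring
      rw [e]
    rw [h1, msum]
    have : ∀ x : ℤ, X (x-1) = X x + (X (x-1) - X x) := by intro x; ring
    rw [Finset.sum_congr rfl (fun x _ => this x), Finset.sum_add_distrib, telesum]
  · have h1 : msum X (n + 2) (n + N + 1) = ∑ x ∈ Finset.Icc (n+1) (n+N), X (x+1) := by
      have e1 : (n : ℤ) + 2 = (n + 1) + 1 := by ring
      rw [msum, e1, ← shiftsum (fun x => X (x+1)) (n+1) (n+N)]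
      apply Finset.sum_congr rfl
      intro x _
      have : x - 1 + 1 = x := by ring
      rw [this]
    rw [h1, msum]
    set g : ℤ → ℤ := fun x => -X (x+1) with hg
    have : ∀ x : ℤ, X (x+1) = X x + (g (x-1) - g x) := by
      intro x; simp only [hg]
      have : x - 1 + 1 = x := by ring
      rw [this]; ring
    rw [Finset.sum_congr rfl (fun x _ => this x), Finset.sum_add_distrib, telesum]
    simp only [hg]
    ring
  · set f : ℤ → ℤ := fun x => min (X x) (K - X (x+1)) with hf
    have hfx : ∀ x : ℤ, Tmap K X x = X x + (f (x-1) - f x) := by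
      intro x
      simp only [Tmap, hf]
      have : x - 1 + 1 = x := by ring
      rw [this]; ring
    rw [msum, msum, Finset.sum_congr rfl (fun x _ => hfx x), Finset.sum_add_distrib, telesum]

/-- The traffic map preserves `(ρ,φ)`-regularity; in fact the particle count of
any window of `TX` lies between the counts of the two shifted windows of `X`. -/
theorem stmt_3 (K : ℤ) (hK : 1 ≤ K) (X : ℤ → ℤ) (hX : IsConf K X)
    (ρ : ℝ) (hρ0 : 0 ≤ ρ) (hρK : ρ ≤ K) (φ : ℕ → ℝ)
    (hφanti : StrictAntiOn φ (Set.Ici 1))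
    (hφ0 : Filter.Tendsto φ Filter.atTop (nhds 0))
    (hreg : IsRegularConf ρ φ X) :
    IsRegularConf ρ φ (Tmap K X) ∧
    (∀ (n : ℤ) (N : ℕ), 1 ≤ N →
      min (msum X n (n + N - 1)) (msum X (n + 2) (n + N + 1)) ≤
          msum (Tmap K X) (n + 1) (n + N) ∧
      msum (Tmap K X) (n + 1) (n + N) ≤
          max (msum X n (n + N - 1)) (msum X (n + 2) (n + N + 1))) := by
  have hbound : ∀ (n : ℤ) (N : ℕ),
      min (msum X n (n + N - 1)) (msum X (n + 2) (n + N + 1)) ≤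
          msum (Tmap K X) (n + 1) (n + N) ∧
      msum (Tmap K X) (n + 1) (n + N) ≤
          max (msum X n (n + N - 1)) (msum X (n + 2) (n + N + 1)) := by
    intro n N
    obtain ⟨hA, hB, hT⟩ := key K X n N
    rw [hA, hB, hT]
    omega
  refine ⟨?_, fun n N _ => hbound n N⟩
  intro n N hN
  obtain ⟨h1, h2⟩ := hbound n N
  have hA' : |(msum X n (n + N - 1) : ℝ) / N - ρ| ≤ φ N := by
    have := hreg (n - 1) N hN
    have e1 : n - 1 + 1 = n := by ring
    have e2 : n - 1 + (N : ℤ) = n + N - 1 := by ring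
    rwa [e1, e2] at this
  have hB' : |(msum X (n + 2) (n + N + 1) : ℝ) / N - ρ| ≤ φ N := by
    have := hreg (n + 1) N hN
    have e1 : n + 1 + 1 = n + 2 := by ring
    have e2 : n + 1 + (N : ℤ) = n + N + 1 := by ring
    rwa [e1, e2] at this
  have hN0 : (0 : ℝ) < N := by exact_mod_cast hN
  rw [abs_le] at hA' hB' ⊢
  rcases le_total (msum X n (n + N - 1)) (msum X (n + 2) (n + N + 1)) with h | h
  · rw [min_eq_left h] at h1
    rw [max_eq_right h] at h2
    have c1 : (msum X n (n + N - 1) : ℝ) / N ≤ (msum (Tmap K X) (n + 1) (n + N) : ℝ) / N := by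
      gcongr
    have c2 : (msum (Tmap K X) (n + 1) (n + N) : ℝ) / N ≤ (msum X (n + 2) (n + N + 1) : ℝ) / N := by
      gcongr
    exact ⟨by linarith [hA'.1], by linarith [hB'.2]⟩
  · rw [min_eq_right h] at h1
    rw [max_eq_left h] at h2
    have c1 : (msum X (n + 2) (n + N + 1) : ℝ) / N ≤ (msum (Tmap K X) (n + 1) (n + N) : ℝ) / N := by
      gcongr
    have c2 : (msum (Tmap K X) (n + 1) (n + N) : ℝ) / N ≤ (msum X n (n + N - 1) : ℝ) / N := by
      gcongr
    exact ⟨by linarith [hB'.1], by linarith [hA'.2]⟩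
end

section
/- Let K ≥ 1 and let X be a configuration with a jammed cluster on the sites k+1,…,k+n with n ≥ 2. Then (TX)(k+n) + (TX)(k+n+1) = K; in particular the site k+n is free (not jammed) in the configuration TX. -/
/-- `X` has a jammed cluster on the sites `k+1, …, k+n`: each of these sites is
jammed (`X(x) + X(x+1) > K`) while the sites `k` and `k+n+1` are free. -/
def HasJammedCluster (K : ℤ) (X : ℤ → ℤ) (k n : ℤ) : Prop :=
  (∀ x ∈ Finset.Icc (k + 1) (k + n), K < X x + X (x + 1)) ∧
  X k + X (k + 1) ≤ K ∧ X (k + n + 1) + X (k + n + 2) ≤ K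

/-- For a jammed cluster of length `n ≥ 2`, after one step the site `k+n`
becomes free: `(TX)(k+n) + (TX)(k+n+1) = K`. -/
theorem stmt_7 (K : ℤ) (hK : 1 ≤ K) (X : ℤ → ℤ) (hX : IsConf K X)
    (k n : ℤ) (hn : 2 ≤ n) (hjam : HasJammedCluster K X k n) :
    Tmap K X (k + n) + Tmap K X (k + n + 1) = K ∧
    Tmap K X (k + n) + Tmap K X (k + n + 1) ≤ K := by
  obtain ⟨hj, hfree0, hfree1⟩ := hjam
  have h1 : K < X (k + n - 1) + X (k + n - 1 + 1) := by
    apply hj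
    rw [Finset.mem_Icc]
    omega
  have h2 : K < X (k + n) + X (k + n + 1) := by
    apply hj
    rw [Finset.mem_Icc]
    omega
  have e1 : k + n - 1 + 1 = k + n := by ring
  rw [e1] at h1
  have e2 : k + n + 1 - 1 = k + n := by ring
  have e3 : k + n + 1 + 1 = k + n + 2 := by ring
  simp only [Tmap, e1, e2, e3]
  have m1 : min (X (k + n - 1)) (K - X (k + n)) = K - X (k + n) := by
    apply min_eq_right; omega
  have m2 : min (X (k + n + 1)) (K - X (k + n + 2)) = X (k + n + 1) := by
    apply min_eq_left; omega
  rw [m1, m2]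
  constructor <;> ring_nf <;> omega
end

section
/- Let K ≥ 1, let ρ ∈ [0, K/2) be real, let φ be a strictly decreasing function on the positive integers with φ(N) → 0, and let X be a (ρ,φ)-regular configuration. Let N be a positive integer with φ(N) < K/2 − ρ. Then for every integer t with 4t ≥ (N+1)², the configuration T^t X is free. -/
/-- A configuration is free if `X(x) + X(x+1) ≤ K` for all `x`. -/
def IsFree (K : ℤ) (X : ℤ → ℤ) : Prop := ∀ x, X x + X (x + 1) ≤ K

-- auxiliary lemmas

lemma msum_succ_top (X : ℤ → ℤ) (a b : ℤ) (h : a ≤ b + 1) :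
    msum X a (b+1) = msum X a b + X (b+1) := by
  have hins : Finset.Icc a (b+1) = insert (b+1) (Finset.Icc a b) := by
    ext y; simp only [Finset.mem_Icc, Finset.mem_insert]; omega
  rw [msum, msum, hins, Finset.sum_insert (by simp only [Finset.mem_Icc]; omega)]
  ring

lemma msum_succ_bot (X : ℤ → ℤ) (a b : ℤ) (h : a ≤ b) :
    msum X a b = X a + msum X (a+1) b := by
  have hins : Finset.Icc a b = insert a (Finset.Icc (a+1) b) := by
    ext y; simp only [Finset.mem_Icc, Finset.mem_insert]; omega
  rw [msum, msum, hins, Finset.sum_insert (by simp only [Finset.mem_Icc]; omega)]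

lemma msum_empty (X : ℤ → ℤ) (a b : ℤ) (h : b < a) : msum X a b = 0 := by
  rw [msum, Finset.Icc_eq_empty (by omega), Finset.sum_empty]

noncomputable def Fcum (X : ℤ → ℤ) (x : ℤ) : ℤ := msum X 1 x - msum X (x+1) 0

lemma Fcum_step (X : ℤ → ℤ) (x : ℤ) : Fcum X x - Fcum X (x-1) = X x := by
  rcases le_or_gt 1 x with h | h
  · have h1 : msum X (x+1) 0 = 0 := msum_empty X _ _ (by omega)
    have h2 : msum X (x-1+1) 0 = 0 := msum_empty X _ _ (by omega)
    have h3 : msum X 1 x = msum X 1 (x-1) + X x := by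
      have := msum_succ_top X 1 (x-1) (by omega)
      rw [show x - 1 + 1 = x by ring] at this
      exact this
    rw [Fcum, Fcum, h1, h2, h3]; ring
  · have h1 : msum X 1 x = 0 := msum_empty X _ _ (by omega)
    have h2 : msum X 1 (x-1) = 0 := msum_empty X _ _ (by omega)
    have h3 : msum X x 0 = X x + msum X (x+1) 0 := msum_succ_bot X x 0 (by omega)
    rw [Fcum, Fcum, h1, h2, show x - 1 + 1 = x by ring, h3]; ring

lemma Fcum_sub (X : ℤ → ℤ) (a b : ℤ) (h : a ≤ b) :
    Fcum X b - Fcum X a = msum X (a+1) b := by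
  have H : ∀ b' : ℤ, a ≤ b' → Fcum X b' - Fcum X a = msum X (a+1) b' := by
    refine Int.le_induction ?_ ?_
    · rw [msum_empty X _ _ (by omega)]; ring
    · intro b hb ih
      have hstep := Fcum_step X (b+1)
      rw [show b + 1 - 1 = b by ring] at hstep
      rw [msum_succ_top X (a+1) b (by omega)]
      omega
  exact H b h

noncomputable def Gfun (K : ℤ) (X : ℤ → ℤ) : ℕ → ℤ → ℤ
  | 0 => Fcum X
  | (t+1) => fun x => max (Gfun K X t (x-1)) (Gfun K X t (x+1) - K)

lemma Gfun_diff (K : ℤ) (X : ℤ → ℤ) : ∀ (s : ℕ) (x : ℤ),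
    Gfun K X s x - Gfun K X s (x-1) = (Tmap K)^[s] X x := by
  intro s
  induction s with
  | zero => intro x; simpa [Gfun] using Fcum_step X x
  | succ s ih =>
      intro x
      have h0 := ih x
      have h1 := ih (x-1)
      have h2 := ih (x+1)
      rw [show x + 1 - 1 = x by ring] at h2
      rw [Function.iterate_succ_apply']
      simp only [Gfun]
      rw [show x - 1 + 1 = x by ring]
      rw [show Tmap K ((Tmap K)^[s] X) x = (Tmap K)^[s] X x
        + min ((Tmap K)^[s] X (x-1)) (K - (Tmap K)^[s] X x)
        - min ((Tmap K)^[s] X x) (K - (Tmap K)^[s] X (x+1)) from rfl]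
      omega

lemma Gfun_lb (K : ℤ) (X : ℤ → ℤ) : ∀ (s : ℕ) (x : ℤ) (j : ℕ), j ≤ s →
    Fcum X (x - s + 2*j) - K*j ≤ Gfun K X s x := by
  intro s
  induction s with
  | zero =>
      intro x j hj
      interval_cases j
      simp [Gfun]
  | succ s ih =>
      intro x j hj
      rcases Nat.lt_or_ge j (s+1) with h | h
      · have hj' : j ≤ s := by omega
        have := ih (x-1) j hj'
        have e : x - ((s:ℤ)+1) + 2*j = (x-1) - s + 2*j := by ring
        simp only [Gfun]
        push_cast
        rw [e]
        exact le_trans this (le_max_left _ _)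
      · have hj2 : j = s + 1 := by omega
        subst hj2
        have := ih (x+1) s le_rfl
        have e : x - ((s:ℤ)+1) + 2*((s:ℤ)+1) = (x+1) - s + 2*s := by ring
        simp only [Gfun]
        push_cast
        rw [e]
        have h2 : Fcum X (x + 1 - ↑s + 2*↑s) - K*((s:ℤ)+1) ≤ Gfun K X s (x+1) - K := by linarith
        calc Fcum X (x + 1 - ↑s + 2*↑s) - K*((s:ℤ)+1) ≤ Gfun K X s (x+1) - K := h2
          _ ≤ _ := le_max_right _ _

lemma Gfun_ub (K : ℤ) (X : ℤ → ℤ) : ∀ (s : ℕ) (x : ℤ),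
    ∃ j : ℕ, j ≤ s ∧ Gfun K X s x = Fcum X (x - s + 2*j) - K*j := by
  intro s
  induction s with
  | zero => intro x; exact ⟨0, le_rfl, by simp [Gfun]⟩
  | succ s ih =>
      intro x
      rcases le_total (Gfun K X s (x-1)) (Gfun K X s (x+1) - K) with h | h
      · obtain ⟨j, hj, e⟩ := ih (x+1)
        refine ⟨j+1, by omega, ?_⟩
        have hmx : Gfun K X (s+1) x = Gfun K X s (x+1) - K := by
          simp only [Gfun]; exact max_eq_right h
        rw [hmx, e, show x + 1 - (s:ℤ) + 2*(j:ℤ) = x - ((s:ℤ)+1) + 2*((j:ℤ)+1) by ring]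
        push_cast
        ring
      · obtain ⟨j, hj, e⟩ := ih (x-1)
        refine ⟨j, by omega, ?_⟩
        have hmx : Gfun K X (s+1) x = Gfun K X s (x-1) := by
          simp only [Gfun]; exact max_eq_left h
        rw [hmx, e, show x - 1 - (s:ℤ) + 2*(j:ℤ) = x - ((s:ℤ)+1) + 2*(j:ℤ) by ring]
        push_cast
        ring


/-- A regular configuration with density below `K/2` becomes free after the
transient period of length `(N+1)²/4`. -/
theorem stmt_9 (K : ℤ) (hK : 1 ≤ K) (X : ℤ → ℤ) (hX : IsConf K X)
    (ρ : ℝ) (hρ0 : 0 ≤ ρ) (hρK : ρ < K / 2) (φ : ℕ → ℝ)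
    (hφanti : StrictAntiOn φ (Set.Ici 1))
    (hφ0 : Filter.Tendsto φ Filter.atTop (nhds 0))
    (hreg : IsRegularConf ρ φ X)
    (N : ℕ) (hN : 1 ≤ N) (hNφ : φ N < K / 2 - ρ)
    (t : ℕ) (ht : (N + 1) ^ 2 ≤ 4 * t) :
    IsFree K ((Tmap K)^[t] X) := by

  -- density bound for windows of length ≥ N
  have density : ∀ (n : ℤ) (M : ℕ), N ≤ M → 2 * msum X (n+1) (n+M) ≤ K * M - 1 := by
    intro n M hM
    have hM1 : 1 ≤ M := le_trans hN hM
    have hreg' := hreg n M hM1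
    have hφM : φ M ≤ φ N := by
      rcases eq_or_lt_of_le hM with h | h
      · rw [h]
      · exact le_of_lt (hφanti (Set.mem_Ici.mpr hN) (Set.mem_Ici.mpr hM1) h)
    have habs := (abs_le.mp hreg').2
    have hMpos : (0:ℝ) < (M:ℝ) := by exact_mod_cast hM1
    have h1 : (msum X (n+1) (n+M) : ℝ) / M < (K:ℝ)/2 := by linarith
    have h2 : (msum X (n+1) (n+M) : ℝ) < (K:ℝ)/2 * M := by
      rw [div_lt_iff₀ hMpos] at h1; exact h1
    have h3 : 2 * msum X (n+1) (n+M) < K * M := by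
      have : (2 * (msum X (n+1) (n+M) : ℝ)) < (K:ℝ) * M := by linarith
      exact_mod_cast this
    omega
  -- constants
  set c : ℕ := (N+1)/2 with hc
  have hc1 : 1 ≤ c := by omega
  have hcN : N ≤ 2*c := by omega
  have hsq : 2*(N+1) ≤ (N+1)^2 := by nlinarith
  have ht' : 2*(N+1) ≤ 4*t := le_trans hsq ht
  have hct : c ≤ t := by omega
  intro x
  have hA1 := Gfun_diff K X t x
  have hA2 := Gfun_diff K X t (x+1)
  rw [show x + 1 - 1 = x by ring] at hA2
  obtain ⟨j, hj, hjE⟩ := Gfun_ub K X t (x+1)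
  rcases Nat.lt_or_ge j t with hjt | hjt
  · -- use lower bound at x-1 with index j+1
    have hlb := Gfun_lb K X t (x-1) (j+1) (by omega)
    have e : (x-1) - (t:ℤ) + 2*((j:ℤ)+1) = (x+1) - t + 2*j := by ring
    push_cast at hlb
    rw [e] at hlb
    -- G t (x+1) = Fcum(...) - K j ≤ (G t (x-1) + K j + K) - K j
    have : Gfun K X t (x+1) ≤ Gfun K X t (x-1) + K := by
      rw [hjE]; linarith
    linarith [hA1, hA2, this]
  · -- j = t
    have hjt' : j = t := le_antisymm hj hjt
    rw [hjt'] at hjE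
    set i : ℕ := t + 1 - c with hi
    have hiInt : (i:ℤ) = (t:ℤ) + 1 - c := by
      have : c ≤ t + 1 := by omega
      push_cast [hi, Nat.cast_sub this]; ring
    have hlb := Gfun_lb K X t (x-1) i (by omega)
    have e : (x-1) - (t:ℤ) + 2*(i:ℤ) = x + 1 + t - 2*c := by rw [hiInt]; ring
    rw [e] at hlb
    have hKi : K * (i:ℤ) = K * t + K - K * c := by rw [hiInt]; ring
    -- window sum
    have hab : (x + 1 + (t:ℤ) - 2*c) ≤ x + 1 + t := by
      have : (0:ℤ) ≤ 2*(c:ℤ) := by positivity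
      omega
    have hsub := Fcum_sub X (x + 1 + t - 2*c) (x + 1 + t) hab
    have hden := density (x + 1 + t - 2*c) (2*c) hcN
    rw [show (x + 1 + (t:ℤ) - 2*c) + (2*c : ℕ) = x + 1 + t by push_cast; ring] at hden
    -- m ≤ K*c
    have hm : Fcum X (x+1+t) - Fcum X (x+1+t-2*c) ≤ K * c := by
      rw [hsub]
      push_cast at hden
      have hKc2 : K * (2 * (c:ℤ)) = 2 * (K * (c:ℤ)) := by ring
      rw [hKc2] at hden
      omega
    have hup : Gfun K X t (x+1) ≤ Gfun K X t (x-1) + K := by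
      rw [hjE]
      rw [show (x+1) - (t:ℤ) + 2*t = x + 1 + t by ring]
      linarith
    linarith [hA1, hA2, hup]
end

section
/- Let K ≥ 1, let n ≥ 1, and let X be a 2n-periodic configuration with density ρ = m(X,1,2n)/(2n). Then for every integer t ≥ n: if ρ ≤ K/2 then T^t X is free, and if ρ ≥ K/2 then the dual configuration (T^t X)* is free (equivalently, (T^t X)(x)+(T^t X)(x+1) ≥ K for all x ∈ ℤ). -/
/-- The dual configuration `X*(x) = K - X(x)`, describing empty places. -/
def dualConf (K : ℤ) (X : ℤ → ℤ) : ℤ → ℤ := fun x => K - X x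

/-! ### Auxiliary machinery: height function and max-plus linearization -/

/-- The height function of a configuration: `height X x - height X (x-1) = X x`. -/
noncomputable def height (X : ℤ → ℤ) (x : ℤ) : ℤ :=
  (∑ y ∈ Finset.Icc 1 x, X y) - ∑ y ∈ Finset.Icc (x + 1) 0, X y

lemma Icc_insert_top (a b : ℤ) (h : a ≤ b) :
    Finset.Icc a b = insert b (Finset.Icc a (b - 1)) := by
  ext y; simp; omega

lemma Icc_insert_bot (a b : ℤ) (h : a ≤ b) :
    Finset.Icc a b = insert a (Finset.Icc (a + 1) b) := by
  ext y; simp; omega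

lemma height_sub (X : ℤ → ℤ) (x : ℤ) : height X x - height X (x - 1) = X x := by
  unfold height
  rcases le_or_gt 1 x with h | h
  · rw [Finset.Icc_eq_empty (by omega : ¬ (x + 1 ≤ (0:ℤ))),
      Finset.Icc_eq_empty (by omega : ¬ (x - 1 + 1 ≤ (0:ℤ))),
      Icc_insert_top 1 x h, Finset.sum_insert (by simp)]
    simp
  · rw [Finset.Icc_eq_empty (by omega : ¬ ((1:ℤ) ≤ x)),
      Finset.Icc_eq_empty (by omega : ¬ ((1:ℤ) ≤ x - 1)),
      show x - 1 + 1 = x by ring,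
      Icc_insert_bot x 0 (by omega), Finset.sum_insert (by simp)]
    simp

lemma height_succ (X : ℤ → ℤ) (x : ℤ) : height X (x + 1) = height X x + X (x + 1) := by
  have h := height_sub X (x + 1)
  rw [show x + 1 - 1 = x by ring] at h
  omega

lemma height_zero (X : ℤ → ℤ) : height X 0 = 0 := by
  simp [height]

lemma height_periodic (X : ℤ → ℤ) (p : ℤ) (hper : IsPeriodic p X) :
    ∀ x, height X (x + p) = height X x + height X p := by
  intro x
  induction x using Int.induction_on with
  | zero => simp [height_zero]
  | succ i ih =>
      have h1 := height_succ X ((i : ℤ) + p)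
      rw [show (i : ℤ) + p + 1 = (i : ℤ) + 1 + p by ring] at h1
      have h2 := height_succ X (i : ℤ)
      have h3 : X ((i : ℤ) + 1 + p) = X ((i : ℤ) + 1) := hper ((i : ℤ) + 1)
      omega
  | pred i ih =>
      have h1 := height_succ X (-(i : ℤ) - 1 + p)
      rw [show -(i : ℤ) - 1 + p + 1 = -(i : ℤ) + p by ring] at h1
      have h2 := height_succ X (-(i : ℤ) - 1)
      rw [show -(i : ℤ) - 1 + 1 = -(i : ℤ) by ring] at h2
      have h3 : X (-(i : ℤ) + p) = X (-(i : ℤ)) := hper (-(i : ℤ))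
      omega

/-- The max-plus evolution of the height function. -/
noncomputable def Hfun (K : ℤ) (X : ℤ → ℤ) : ℕ → ℤ → ℤ
  | 0, x => height X x
  | t + 1, x => max (Hfun K X t (x - 1)) (Hfun K X t (x + 1) - K)

/-- The iterated traffic map is the increment of the max-plus evolved height. -/
lemma iter_height (K : ℤ) (X : ℤ → ℤ) :
    ∀ (t : ℕ) (x : ℤ), (Tmap K)^[t] X x = Hfun K X t x - Hfun K X t (x - 1) := by
  have hT : ∀ (Y : ℤ → ℤ) (x : ℤ),
      Tmap K Y x = Y x + min (Y (x - 1)) (K - Y x) - min (Y x) (K - Y (x + 1)) :=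
    fun _ _ => rfl
  intro t
  induction t with
  | zero => intro x; simp [Hfun, height_sub]
  | succ t ih =>
      intro x
      rw [Function.iterate_succ_apply', hT, ih x, ih (x - 1), ih (x + 1)]
      simp only [Hfun]
      rw [show x + 1 - 1 = x by ring, show x - 1 + 1 = x by ring]
      omega

lemma Hfun_ge (K : ℤ) (X : ℤ → ℤ) :
    ∀ (t j : ℕ), j ≤ t → ∀ x,
      height X (x - t + 2 * j) - j * K ≤ Hfun K X t x := by
  intro t
  induction t with
  | zero =>
      intro j hj x
      have : j = 0 := Nat.le_zero.mp hj
      subst this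
      simp [Hfun]
  | succ t ih =>
      intro j hj x
      simp only [Hfun]
      rcases Nat.lt_or_ge j (t + 1) with h | h
      · refine le_trans ?_ (le_max_left _ _)
        have hih := ih j (by omega) (x - 1)
        have hpt : x - ((t : ℤ) + 1) + 2 * (j : ℤ) = x - 1 - (t : ℤ) + 2 * (j : ℤ) := by
          ring
        push_cast
        rw [hpt]
        exact hih
      · have hjt : j = t + 1 := by omega
        subst hjt
        refine le_trans ?_ (le_max_right _ _)
        have hih := ih t le_rfl (x + 1)
        have hpt : x - ((t : ℤ) + 1) + 2 * ((t : ℤ) + 1) = x + 1 - (t : ℤ) + 2 * (t : ℤ) := by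
          ring
        have hexp : ((t : ℤ) + 1) * K = (t : ℤ) * K + K := by ring
        push_cast
        rw [hpt]
        linarith [hih, hexp]

lemma Hfun_le (K : ℤ) (X : ℤ → ℤ) :
    ∀ (t : ℕ) (x : ℤ), ∃ j : ℕ, j ≤ t ∧
      Hfun K X t x = height X (x - t + 2 * j) - j * K := by
  intro t
  induction t with
  | zero => intro x; exact ⟨0, le_rfl, by simp [Hfun]⟩
  | succ t ih =>
      intro x
      rcases le_total (Hfun K X t (x + 1) - K) (Hfun K X t (x - 1)) with h | h
      · obtain ⟨j, hj, he⟩ := ih (x - 1)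
        refine ⟨j, by omega, ?_⟩
        simp only [Hfun]
        rw [max_eq_left h, he]
        push_cast
        rw [show x - ((t : ℤ) + 1) + 2 * (j : ℤ) = x - 1 - (t : ℤ) + 2 * (j : ℤ) by ring]
      · obtain ⟨j, hj, he⟩ := ih (x + 1)
        refine ⟨j + 1, by omega, ?_⟩
        simp only [Hfun]
        rw [max_eq_right h, he]
        push_cast
        rw [show x - ((t : ℤ) + 1) + 2 * ((j : ℤ) + 1) = x + 1 - (t : ℤ) + 2 * (j : ℤ) by ring]
        ring

/-- A `2n`-periodic configuration reaches its steady state after at most `n`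
iterations. -/
theorem stmt_12 (K : ℤ) (hK : 1 ≤ K) (n : ℕ) (hn : 1 ≤ n) (X : ℤ → ℤ)
    (hX : IsConf K X) (hper : IsPeriodic (2 * n) X) (ρ : ℝ)
    (hρ : ρ = (msum X 1 (2 * n) : ℝ) / (2 * n)) :
    ∀ t : ℕ, n ≤ t →
      (ρ ≤ (K : ℝ) / 2 → IsFree K ((Tmap K)^[t] X)) ∧
      ((K : ℝ) / 2 ≤ ρ →
        IsFree K (dualConf K ((Tmap K)^[t] X)) ∧
        ∀ x : ℤ, K ≤ (Tmap K)^[t] X x + (Tmap K)^[t] X (x + 1)) := by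
  intro t ht
  set m : ℤ := msum X 1 (2 * n) with hm
  have hm_height : height X (2 * n) = m := by
    rw [hm]
    unfold height msum
    rw [Finset.Icc_eq_empty (by push_cast; omega : ¬ (2 * (n:ℤ) + 1 ≤ 0))]
    simp
  have hperiod : ∀ x, height X (x + 2 * n) = height X x + m := by
    intro x
    rw [height_periodic X (2 * n) hper x, hm_height]
  have hsum : ∀ x : ℤ, (Tmap K)^[t] X x + (Tmap K)^[t] X (x + 1)
      = Hfun K X t (x + 1) - Hfun K X t (x - 1) := by
    intro x
    rw [iter_height K X t x, iter_height K X t (x + 1),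
      show x + 1 - 1 = x by ring]
    ring
  have h2n : (0 : ℝ) < 2 * n := by positivity
  constructor
  · -- low density case
    intro hρle
    have hmle : m ≤ (n : ℤ) * K := by
      rw [hρ, div_le_div_iff₀ h2n two_pos] at hρle
      have : (m : ℝ) ≤ (n : ℝ) * (K : ℝ) := by nlinarith
      exact_mod_cast this
    intro x
    rw [hsum x]
    obtain ⟨j, hj, he⟩ := Hfun_le K X t (x + 1)
    rcases Nat.lt_or_ge j t with hlt | hge
    · have hge2 := Hfun_ge K X t (j + 1) (by omega) (x - 1)
      push_cast at hge2
      rw [show x - 1 - (t : ℤ) + 2 * ((j : ℤ) + 1) = x + 1 - (t : ℤ) + 2 * (j : ℤ) by ring]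
        at hge2
      have hexp : ((j : ℤ) + 1) * K = (j : ℤ) * K + K := by ring
      linarith [hge2, he.le, he.ge, hexp]
    · have hjt : j = t := by omega
      rw [hjt] at he
      rw [show x + 1 - (t : ℤ) + 2 * (t : ℤ) = x + 1 + (t : ℤ) by ring] at he
      have hge2 := Hfun_ge K X t (t + 1 - n) (by omega) (x - 1)
      have hc : ((t + 1 - n : ℕ) : ℤ) = (t : ℤ) + 1 - (n : ℤ) := by omega
      rw [hc] at hge2
      rw [show x - 1 - (t : ℤ) + 2 * ((t : ℤ) + 1 - (n : ℤ)) = x + 1 + (t : ℤ) - 2 * (n : ℤ)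
        by ring] at hge2
      have hper2 : height X (x + 1 + (t : ℤ) - 2 * n) = height X (x + 1 + t) - m := by
        have := hperiod (x + 1 + (t : ℤ) - 2 * n)
        rw [show x + 1 + (t : ℤ) - 2 * (n : ℤ) + 2 * (n : ℤ) = x + 1 + (t : ℤ) by ring] at this
        omega
      rw [hper2] at hge2
      have hexp : ((t : ℤ) + 1 - (n : ℤ)) * K = (t : ℤ) * K + K - (n : ℤ) * K := by ring
      linarith [hge2, he.le, he.ge, hexp, hmle]
  · -- high density case
    intro hρge
    have hmge : (n : ℤ) * K ≤ m := by
      rw [hρ, div_le_div_iff₀ two_pos h2n] at hρge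
      have : (n : ℝ) * (K : ℝ) ≤ (m : ℝ) := by nlinarith
      exact_mod_cast this
    have key : ∀ x : ℤ, K ≤ Hfun K X t (x + 1) - Hfun K X t (x - 1) := by
      intro x
      obtain ⟨j, hj, he⟩ := Hfun_le K X t (x - 1)
      rcases Nat.eq_zero_or_pos j with hj0 | hjpos
      · rw [hj0] at he
        push_cast at he
        rw [show x - 1 - (t : ℤ) + 0 = x - 1 - (t : ℤ) by ring] at he
        rw [zero_mul, sub_zero] at he
        have hge2 := Hfun_ge K X t (n - 1) (by omega) (x + 1)
        have hc : ((n - 1 : ℕ) : ℤ) = (n : ℤ) - 1 := by omega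
        rw [hc] at hge2
        rw [show x + 1 - (t : ℤ) + 2 * ((n : ℤ) - 1) = x - 1 - (t : ℤ) + 2 * (n : ℤ) by ring]
          at hge2
        have hper2 : height X (x - 1 - (t : ℤ) + 2 * n) = height X (x - 1 - t) + m :=
          hperiod (x - 1 - t)
        rw [hper2] at hge2
        have hexp : ((n : ℤ) - 1) * K = (n : ℤ) * K - K := by ring
        linarith [hge2, he.le, he.ge, hexp, hmge]
      · have hge2 := Hfun_ge K X t (j - 1) (by omega) (x + 1)
        have hc : ((j - 1 : ℕ) : ℤ) = (j : ℤ) - 1 := by omega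
        rw [hc] at hge2
        rw [show x + 1 - (t : ℤ) + 2 * ((j : ℤ) - 1) = x - 1 - (t : ℤ) + 2 * (j : ℤ) by ring]
          at hge2
        have hexp : ((j : ℤ) - 1) * K = (j : ℤ) * K - K := by ring
        linarith [hge2, he.le, he.ge, hexp]
    constructor
    · intro x
      have hk := key x
      have hs := hsum x
      simp only [dualConf]
      omega
    · intro x
      have hk := key x
      have hs := hsum x
      omega
end

section
/- Let K ≥ 1, let n ≥ 1, and let X be a (2n+1)-periodic configuration with density ρ = m(X,1,2n+1)/(2n+1). Then for every integer t ≥ 2n+1: if ρ ≤ K/2 then T^t X is free, and if ρ ≥ K/2 then the dual configuration (T^t X)* is free (equivalently, (T^t X)(x)+(T^t X)(x+1) ≥ K for all x ∈ ℤ). -/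
namespace Stmt13Aux

/-- Antiderivative of `X`: `F x = Σ_{z=1}^x X z` (signed for negative `x`). -/
def F (X : ℤ → ℤ) (x : ℤ) : ℤ :=
  (∑ i ∈ Finset.range x.toNat, X (i+1)) - ∑ i ∈ Finset.range (-x).toNat, X (-(i:ℤ))

lemma F_step (X : ℤ → ℤ) (x : ℤ) : F X x = F X (x-1) + X x := by
  unfold F
  rcases le_or_gt 1 x with hx | hx
  · have h1 : x.toNat = (x-1).toNat + 1 := by omega
    have h2 : (-x).toNat = 0 := by omega
    have h3 : (-(x-1)).toNat = 0 := by omega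
    rw [h1, h2, h3, Finset.sum_range_succ]
    have h4 : ((x-1).toNat : ℤ) + 1 = x := by omega
    rw [h4]
    simp
  · have h1 : x.toNat = 0 := by omega
    have h2 : (x-1).toNat = 0 := by omega
    have h3 : (-(x-1)).toNat = (-x).toNat + 1 := by omega
    rw [h1, h2, h3, Finset.sum_range_succ]
    have h4 : -(((-x).toNat : ℤ)) = x := by omega
    rw [h4]
    simp

lemma F_zero (X : ℤ → ℤ) : F X 0 = 0 := by simp [F]


lemma msum_succ (X : ℤ → ℤ) (b : ℤ) (hb : 0 ≤ b) :
    msum X 1 (b+1) = msum X 1 b + X (b+1) := by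
  have hni : (b+1) ∉ Finset.Icc (1:ℤ) b := by simp
  have hins : Finset.Icc (1:ℤ) (b+1) = insert (b+1) (Finset.Icc 1 b) := by
    ext z; simp only [Finset.mem_Icc, Finset.mem_insert]; omega
  unfold msum
  rw [hins, Finset.sum_insert hni]
  ring

lemma F_nat (X : ℤ → ℤ) (k : ℕ) : F X (k:ℤ) = msum X 1 (k:ℤ) := by
  induction k with
  | zero => simp [F_zero, msum]
  | succ k ih =>
    have h1 : ((k+1:ℕ):ℤ) = (k:ℤ)+1 := by push_cast; ring
    rw [h1, msum_succ X (k:ℤ) (by positivity)]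
    have h2 := F_step X ((k:ℤ)+1)
    rw [add_sub_cancel_right] at h2
    rw [h2, ih]

lemma F_shift (X : ℤ → ℤ) (N : ℤ) (hper : IsPeriodic N X) :
    ∀ y, F X (y + N) = F X y + F X N := by
  set g : ℤ → ℤ := fun y => F X (y + N) - F X y with hg
  have hstep : ∀ y, g y = g (y-1) := by
    intro y
    have h1 := F_step X (y + N)
    have h2 := F_step X y
    have h3 := hper y
    have h4 : y + N - 1 = y - 1 + N := by ring
    rw [h4] at h1
    simp only [hg]
    linarith
  have hconst : ∀ y, g y = g 0 := by
    intro y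
    induction y using Int.induction_on with
    | zero => rfl
    | succ k ih =>
      have := hstep ((k:ℤ)+1)
      rw [add_sub_cancel_right] at this
      rw [this, ih]
    | pred k ih =>
      have := hstep (-(k:ℤ))
      have h4 : -(k:ℤ) - 1 = -((k:ℤ)+1) := by ring
      rw [h4] at this
      rw [show -(k:ℤ) - 1 = -((k:ℤ)+1) from by ring]
      rw [← this, ih]
  intro y
  have := hconst y
  simp only [hg, zero_add, F_zero, sub_zero] at this
  linarith

/-- `ψ(y) = K y - 2 F(y)`. -/
def psi (K : ℤ) (X : ℤ → ℤ) (y : ℤ) : ℤ := K * y - 2 * F X y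

/-- `μ_t(x) = min over admissible path endpoints of ψ`. -/
def mu (K : ℤ) (X : ℤ → ℤ) (t : ℕ) (x : ℤ) : ℤ :=
  (Finset.range (t+1)).inf' Finset.nonempty_range_add_one
    (fun j => psi K X (x - (t:ℤ) + 2*(j:ℤ)))

lemma mu_le (K : ℤ) (X : ℤ → ℤ) (t : ℕ) (x : ℤ) {j : ℕ} (hj : j ≤ t) :
    mu K X t x ≤ psi K X (x - (t:ℤ) + 2*(j:ℤ)) :=
  Finset.inf'_le _ (Finset.mem_range.mpr (by omega))

lemma le_mu (K : ℤ) (X : ℤ → ℤ) {t : ℕ} {x c : ℤ}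
    (hc : ∀ j : ℕ, j ≤ t → c ≤ psi K X (x - (t:ℤ) + 2*(j:ℤ))) : c ≤ mu K X t x :=
  Finset.le_inf' _ _ (fun j hj => hc j (by simp only [Finset.mem_range] at hj; omega))

lemma mu_zero (K : ℤ) (X : ℤ → ℤ) (x : ℤ) : mu K X 0 x = psi K X x := by
  simp [mu]


/-- The height function (cumulative current across edge `(x, x+1)`). -/
def h (K : ℤ) (X : ℤ → ℤ) : ℕ → ℤ → ℤ
  | 0, _ => 0
  | t+1, x => min (h K X t (x-1) + X x) (h K X t (x+1) + K - X (x+1))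

lemma iterate_eq (K : ℤ) (X : ℤ → ℤ) (t : ℕ) :
    ∀ x, (Tmap K)^[t] X x = X x + h K X t (x-1) - h K X t x := by
  induction t with
  | zero => intro x; simp [h]
  | succ t ih =>
    intro x
    rw [Function.iterate_succ_apply']
    simp only [Tmap]
    rw [ih (x-1), ih x, ih (x+1)]
    show _ = X x + min (h K X t (x-1-1) + X (x-1)) (h K X t (x-1+1) + K - X (x-1+1))
      - min (h K X t (x-1) + X x) (h K X t (x+1) + K - X (x+1))
    rw [show x - 1 + 1 = x from by ring, show x + 1 - 1 = x from by ring]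
    omega

lemma mu_succ (K : ℤ) (X : ℤ → ℤ) (t : ℕ) (x : ℤ) :
    mu K X (t+1) x = min (mu K X t (x-1)) (mu K X t (x+1)) := by
  apply le_antisymm
  · refine le_min ?_ ?_
    · apply le_mu
      intro j hj
      have h1 := mu_le K X (t+1) x (j := j) (by omega)
      have harg : x - ((t+1:ℕ):ℤ) + 2*(j:ℤ) = (x-1) - (t:ℤ) + 2*(j:ℤ) := by push_cast; ring
      rwa [harg] at h1
    · apply le_mu
      intro j hj
      have h1 := mu_le K X (t+1) x (j := j+1) (by omega)
      have harg : x - ((t+1:ℕ):ℤ) + 2*((j+1:ℕ):ℤ) = (x+1) - (t:ℤ) + 2*(j:ℤ) := by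
        push_cast; ring
      rwa [harg] at h1
  · apply le_mu
    intro j hj
    rcases Nat.eq_zero_or_pos j with rfl | hj0
    · have h1 := mu_le K X t (x-1) (j := 0) (Nat.zero_le t)
      have harg : (x-1) - (t:ℤ) + 2*((0:ℕ):ℤ) = x - ((t+1:ℕ):ℤ) + 2*((0:ℕ):ℤ) := by
        push_cast; ring
      rw [harg] at h1
      exact le_trans (min_le_left _ _) h1
    · obtain ⟨k, rfl⟩ := Nat.exists_eq_add_of_le hj0
      have h1 := mu_le K X t (x+1) (j := k) (by omega)
      have harg : (x+1) - (t:ℤ) + 2*(k:ℤ) = x - ((t+1:ℕ):ℤ) + 2*((1+k:ℕ):ℤ) := by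
        push_cast; ring
      rw [harg] at h1
      exact le_trans (min_le_right _ _) h1

lemma two_h (K : ℤ) (X : ℤ → ℤ) (t : ℕ) (x : ℤ) :
    2 * h K X t x = 2 * F X x + K * ((t:ℤ) - x) + mu K X t x := by
  induction t generalizing x with
  | zero =>
    rw [show h K X 0 x = 0 from rfl, mu_zero]
    simp only [psi]
    push_cast
    ring
  | succ t ih =>
    have fs2 := F_step X (x+1)
    rw [add_sub_cancel_right] at fs2
    have e1 : 2 * h K X t (x-1) + 2 * X x
        = 2 * F X x + K * ((t:ℤ) + 1 - x) + mu K X t (x-1) := by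
      rw [ih (x-1)]
      linear_combination -2 * F_step X x
    have e2 : 2 * h K X t (x+1) + 2 * K - 2 * X (x+1)
        = 2 * F X x + K * ((t:ℤ) + 1 - x) + mu K X t (x+1) := by
      rw [ih (x+1)]
      linear_combination 2 * fs2
    calc 2 * h K X (t+1) x
        = min (2 * h K X t (x-1) + 2 * X x) (2 * h K X t (x+1) + 2*K - 2 * X (x+1)) := by
          rw [show h K X (t+1) x
            = min (h K X t (x-1) + X x) (h K X t (x+1) + K - X (x+1)) from rfl]
          omega
      _ = (2 * F X x + K * ((t:ℤ) + 1 - x)) + min (mu K X t (x-1)) (mu K X t (x+1)) := by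
          rw [e1, e2, min_add_add_left]
      _ = 2 * F X x + K * (((t+1:ℕ):ℤ) - x) + mu K X (t+1) x := by
          rw [mu_succ]
          push_cast
          ring


lemma sum_le_of_mu (K : ℤ) (X : ℤ → ℤ) (t : ℕ) (x : ℤ)
    (hmu : mu K X t (x-1) ≤ mu K X t (x+1)) :
    (Tmap K)^[t] X x + (Tmap K)^[t] X (x+1) ≤ K := by
  have lA1 := iterate_eq K X t x
  have lA2 := iterate_eq K X t (x+1)
  rw [add_sub_cancel_right] at lA2
  have f1 := two_h K X t (x-1)
  have f2 := two_h K X t (x+1)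
  have fs1 := F_step X x
  have fs2 := F_step X (x+1)
  rw [add_sub_cancel_right] at fs2
  have hr : K * ((t:ℤ) - (x-1)) = K * ((t:ℤ) - (x+1)) + 2*K := by ring
  rw [lA1, lA2]
  linarith

lemma le_sum_of_mu (K : ℤ) (X : ℤ → ℤ) (t : ℕ) (x : ℤ)
    (hmu : mu K X t (x+1) ≤ mu K X t (x-1)) :
    K ≤ (Tmap K)^[t] X x + (Tmap K)^[t] X (x+1) := by
  have lA1 := iterate_eq K X t x
  have lA2 := iterate_eq K X t (x+1)
  rw [add_sub_cancel_right] at lA2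
  have f1 := two_h K X t (x-1)
  have f2 := two_h K X t (x+1)
  have fs1 := F_step X x
  have fs2 := F_step X (x+1)
  rw [add_sub_cancel_right] at fs2
  have hr : K * ((t:ℤ) - (x-1)) = K * ((t:ℤ) - (x+1)) + 2*K := by ring
  rw [lA1, lA2]
  linarith

lemma mu_mono_le (K : ℤ) (X : ℤ → ℤ) (t N : ℕ) (hN : 1 ≤ N) (htN : N ≤ t)
    (hpsi2 : ∀ y : ℤ, psi K X (y - 2*(N:ℤ)) ≤ psi K X y) (x : ℤ) :
    mu K X t (x-1) ≤ mu K X t (x+1) := by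
  apply le_mu
  intro j hj
  rcases Nat.eq_or_lt_of_le hj with rfl | hjt
  · -- j = t : top endpoint, use wrap-around by one period
    have h1 := mu_le K X j (x-1) (j := j+1-N) (by omega)
    have harg : (x-1) - (j:ℤ) + 2*((j+1-N : ℕ):ℤ) = ((x+1) - (j:ℤ) + 2*(j:ℤ)) - 2*(N:ℤ) := by
      have hc : ((j+1-N : ℕ):ℤ) = (j:ℤ)+1-(N:ℤ) := by omega
      rw [hc]; ring
    rw [harg] at h1
    exact le_trans h1 (hpsi2 _)
  · have h1 := mu_le K X t (x-1) (j := j+1) (by omega)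
    have harg : (x-1) - (t:ℤ) + 2*((j+1:ℕ):ℤ) = (x+1) - (t:ℤ) + 2*(j:ℤ) := by
      push_cast; ring
    rwa [harg] at h1

lemma mu_mono_ge (K : ℤ) (X : ℤ → ℤ) (t N : ℕ) (hN : 1 ≤ N) (htN : N ≤ t)
    (hpsi2 : ∀ y : ℤ, psi K X (y + 2*(N:ℤ)) ≤ psi K X y) (x : ℤ) :
    mu K X t (x+1) ≤ mu K X t (x-1) := by
  apply le_mu
  intro j hj
  rcases Nat.eq_zero_or_pos j with rfl | hj0
  · -- j = 0 : bottom endpoint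
    have h1 := mu_le K X t (x+1) (j := N-1) (by omega)
    have harg : (x+1) - (t:ℤ) + 2*((N-1 : ℕ):ℤ) = ((x-1) - (t:ℤ) + 2*((0:ℕ):ℤ)) + 2*(N:ℤ) := by
      have hc : ((N-1 : ℕ):ℤ) = (N:ℤ)-1 := by omega
      rw [hc]; push_cast; ring
    rw [harg] at h1
    exact le_trans h1 (hpsi2 _)
  · obtain ⟨k, rfl⟩ := Nat.exists_eq_add_of_le hj0
    have h1 := mu_le K X t (x+1) (j := k) (by omega)
    have harg : (x+1) - (t:ℤ) + 2*(k:ℤ) = (x-1) - (t:ℤ) + 2*((1+k:ℕ):ℤ) := by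
      push_cast; ring
    rwa [harg] at h1

end Stmt13Aux

open Stmt13Aux in
/-- A `(2n+1)`-periodic configuration reaches its steady state after at most
`2n+1` iterations. -/
theorem stmt_13 (K : ℤ) (hK : 1 ≤ K) (n : ℕ) (hn : 1 ≤ n) (X : ℤ → ℤ)
    (hX : IsConf K X) (hper : IsPeriodic (2 * n + 1) X) (ρ : ℝ)
    (hρ : ρ = (msum X 1 (2 * n + 1) : ℝ) / (2 * n + 1)) :
    ∀ t : ℕ, 2 * n + 1 ≤ t →
      (ρ ≤ (K : ℝ) / 2 → IsFree K ((Tmap K)^[t] X)) ∧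
      ((K : ℝ) / 2 ≤ ρ →
        IsFree K (dualConf K ((Tmap K)^[t] X)) ∧
        ∀ x : ℤ, K ≤ (Tmap K)^[t] X x + (Tmap K)^[t] X (x + 1)) := by
  intro t ht
  have hNpos : (0:ℝ) < 2*(n:ℝ)+1 := by positivity
  have hsh := F_shift X (2*(n:ℤ)+1) hper
  have hFN : F X (2*(n:ℤ)+1) = msum X 1 (2*(n:ℤ)+1) := by
    have h0 := F_nat X (2*n+1)
    have hc : ((2*n+1 : ℕ):ℤ) = 2*(n:ℤ)+1 := by push_cast; ring
    rwa [hc] at h0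
  have hpsi1 : ∀ y, psi K X (y + (2*(n:ℤ)+1))
      = psi K X y + (K*(2*(n:ℤ)+1) - 2*(msum X 1 (2*(n:ℤ)+1))) := by
    intro y
    simp only [psi]
    rw [hsh y, hFN]
    ring
  have hcN : ((2*n+1:ℕ):ℤ) = 2*(n:ℤ)+1 := by push_cast; ring
  constructor
  · -- low density : free
    intro hle
    have hD : 0 ≤ K*(2*(n:ℤ)+1) - 2*(msum X 1 (2*(n:ℤ)+1)) := by
      rw [hρ, div_le_div_iff₀ hNpos (by norm_num)] at hle
      have h2 : ((2*(msum X 1 (2*(n:ℤ)+1)):ℤ):ℝ) ≤ ((K*(2*(n:ℤ)+1):ℤ):ℝ) := by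
        push_cast at hle ⊢
        linarith
      have h3 := (@Int.cast_le ℝ _ _ _).mp h2
      linarith
    have hpsi2 : ∀ y : ℤ, psi K X (y - 2*((2*n+1:ℕ):ℤ)) ≤ psi K X y := by
      intro y
      rw [hcN]
      have e1 := hpsi1 (y - 2*(2*(n:ℤ)+1))
      have e2 := hpsi1 (y - 2*(2*(n:ℤ)+1) + (2*(n:ℤ)+1))
      rw [show y - 2*(2*(n:ℤ)+1) + (2*(n:ℤ)+1) + (2*(n:ℤ)+1) = y from by ring] at e2
      linarith [e1, e2]
    intro x
    exact sum_le_of_mu K X t x (mu_mono_le K X t (2*n+1) (by omega) ht hpsi2 x)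
  · -- high density : dual free
    intro hle
    have hD : K*(2*(n:ℤ)+1) - 2*(msum X 1 (2*(n:ℤ)+1)) ≤ 0 := by
      rw [hρ, div_le_div_iff₀ (by norm_num) hNpos] at hle
      have h2 : ((K*(2*(n:ℤ)+1):ℤ):ℝ) ≤ ((2*(msum X 1 (2*(n:ℤ)+1)):ℤ):ℝ) := by
        push_cast at hle ⊢
        linarith
      have h3 := (@Int.cast_le ℝ _ _ _).mp h2
      linarith
    have hpsi2 : ∀ y : ℤ, psi K X (y + 2*((2*n+1:ℕ):ℤ)) ≤ psi K X y := by
      intro y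
      rw [hcN]
      have e1 := hpsi1 y
      have e2 := hpsi1 (y + (2*(n:ℤ)+1))
      rw [show y + (2*(n:ℤ)+1) + (2*(n:ℤ)+1) = y + 2*(2*(n:ℤ)+1) from by ring] at e2
      linarith [e1, e2]
    have key : ∀ x : ℤ, K ≤ (Tmap K)^[t] X x + (Tmap K)^[t] X (x + 1) := by
      intro x
      exact le_sum_of_mu K X t x (mu_mono_ge K X t (2*n+1) (by omega) ht hpsi2 x)
    refine ⟨?_, key⟩
    intro x
    simp only [dualConf]
    have := key x
    linarith
end

section
/- Let K ≥ 1, let n ≥ 1, and let X be an n-periodic configuration. Then for every integer t ≥ n and every x ∈ ℤ, (T^{t+n} X)(x) = (T^t X)(x); i.e., after the transient period of length at most n, the orbit of X under T is n-periodic in time. -/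
/- ### Auxiliary development: max-plus linearization of the traffic map -/

/-- Difference operator on height functions. -/
def diffS (S : ℤ → ℤ) : ℤ → ℤ := fun y => S y - S (y - 1)

/-- The max-plus evolution on height functions. -/
def Smap (K : ℤ) (S : ℤ → ℤ) : ℤ → ℤ := fun x => max (S (x - 1)) (S (x + 1) - K)

lemma Tmap_diff (K : ℤ) (S : ℤ → ℤ) : Tmap K (diffS S) = diffS (Smap K S) := by
  funext x
  simp only [Tmap, diffS, Smap]
  have e1 : x - 1 - 1 = x - 2 := by ring
  have e2 : x + 1 - 1 = x := by ring
  have e3 : x - 1 + 1 = x := by ring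
  rw [e1, e2, e3]
  omega

lemma Tmap_iter_diff (K : ℤ) (S : ℤ → ℤ) (t : ℕ) :
    (Tmap K)^[t] (diffS S) = diffS ((Smap K)^[t] S) := by
  induction t with
  | zero => rfl
  | succ t ih =>
      rw [Function.iterate_succ_apply', ih, Tmap_diff, Function.iterate_succ_apply']

lemma sup'_add_const (s : Finset ℕ) (H : s.Nonempty) (f : ℕ → ℤ) (c : ℤ) :
    s.sup' H f + c = s.sup' H (fun j => f j + c) := by
  apply le_antisymm
  · have h1 : s.sup' H f ≤ s.sup' H (fun j => f j + c) - c := by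
      apply Finset.sup'_le
      intro j hj
      have := Finset.le_sup' (fun j => f j + c) hj
      omega
    omega
  · apply Finset.sup'_le
    intro j hj
    have := Finset.le_sup' f hj
    omega

lemma sup'_split (a b : ℕ) (hba : b ≤ a + 1) (f : ℕ → ℤ) :
    (Finset.range (a + b + 1)).sup' Finset.nonempty_range_add_one f =
      max ((Finset.range (a + 1)).sup' Finset.nonempty_range_add_one f)
          ((Finset.range (a + 1)).sup' Finset.nonempty_range_add_one (fun j => f (j + b))) := by
  apply le_antisymm
  · apply Finset.sup'_le
    intro j hj
    simp only [Finset.mem_range] at hj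
    by_cases hja : j ≤ a
    · apply le_max_of_le_left
      exact Finset.le_sup' f (by simp; omega)
    · apply le_max_of_le_right
      have hjb : b ≤ j := by omega
      have : f j = (fun j => f (j + b)) (j - b) := by
        simp only []
        congr 1; omega
      rw [this]
      exact Finset.le_sup' (fun j => f (j + b)) (by simp; omega)
  · apply max_le
    · apply Finset.sup'_le
      intro j hj
      exact Finset.le_sup' f (by simp at hj ⊢; omega)
    · apply Finset.sup'_le
      intro j hj
      exact Finset.le_sup' f (by simp at hj ⊢; omega)

lemma Smap_iter_formula (K : ℤ) (S : ℤ → ℤ) (t : ℕ) (x : ℤ) :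
    (Smap K)^[t] S x =
      (Finset.range (t + 1)).sup' Finset.nonempty_range_add_one
        (fun j : ℕ => S (x - (t : ℤ) + 2 * (j : ℤ)) - (j : ℤ) * K) := by
  induction t generalizing x with
  | zero => simp
  | succ t ih =>
      rw [Function.iterate_succ_apply']
      show max ((Smap K)^[t] S (x - 1)) ((Smap K)^[t] S (x + 1) - K) = _
      rw [ih, ih]
      have hsplit := sup'_split t 1 (by omega)
        (fun j : ℕ => S (x - ((t : ℕ) + 1 : ℕ) + 2 * (j : ℤ)) - (j : ℤ) * K)
      rw [hsplit]
      congr 1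
      · apply Finset.sup'_congr _ rfl
        intro j hj
        have e : x - 1 - (t : ℤ) + 2 * (j : ℤ) = x - ((t : ℕ) + 1 : ℕ) + 2 * (j : ℤ) := by
          push_cast; ring
        rw [e]
      · rw [sub_eq_add_neg, sup'_add_const _ _ _ (-K)]
        apply Finset.sup'_congr _ rfl
        intro j hj
        have e : x + 1 - (t : ℤ) + 2 * (j : ℤ) = x - ((t : ℕ) + 1 : ℕ) + 2 * ((j + 1 : ℕ) : ℤ) := by
          push_cast; ring
        rw [e]
        push_cast; ring

lemma key_lemma (K : ℤ) (S : ℤ → ℤ) (n : ℕ) (m : ℤ)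
    (hper : ∀ y : ℤ, S (y + (n : ℤ)) = S y + m)
    (t : ℕ) (ht : n ≤ t) (x : ℤ) :
    (Smap K)^[t + n] S x = (Smap K)^[t] S x + max (-m) (m - (n : ℤ) * K) := by
  rw [Smap_iter_formula, Smap_iter_formula, sup'_split t n (by omega), ← max_add_add_left]
  congr 1
  · rw [sup'_add_const _ _ _ (-m)]
    apply Finset.sup'_congr _ rfl
    intro j hj
    have h := hper (x - ((t + n : ℕ) : ℤ) + 2 * (j : ℤ))
    have e : x - ((t + n : ℕ) : ℤ) + 2 * (j : ℤ) + (n : ℤ) = x - (t : ℤ) + 2 * (j : ℤ) := by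
      push_cast; ring
    rw [e] at h
    linarith
  · rw [sup'_add_const _ _ _ (m - (n : ℤ) * K)]
    apply Finset.sup'_congr _ rfl
    intro j hj
    have h := hper (x - ((t + n : ℕ) : ℤ) + 2 * ((j + n : ℕ) : ℤ) - (n : ℤ))
    have e : x - ((t + n : ℕ) : ℤ) + 2 * ((j + n : ℕ) : ℤ) - (n : ℤ) + (n : ℤ)
        = x - ((t + n : ℕ) : ℤ) + 2 * ((j + n : ℕ) : ℤ) := by ring
    have e2 : x - ((t + n : ℕ) : ℤ) + 2 * ((j + n : ℕ) : ℤ) - (n : ℤ)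
        = x - (t : ℤ) + 2 * (j : ℤ) := by push_cast; ring
    rw [e, e2] at h
    have e3 : ((j + n : ℕ) : ℤ) * K = (j : ℤ) * K + (n : ℤ) * K := by push_cast; ring
    rw [h, e3]
    ring

/-- The height function of a configuration. -/
noncomputable def heightS (X : ℤ → ℤ) : ℤ → ℤ := fun x =>
  (∑ y ∈ Finset.Icc 1 x, X y) - ∑ y ∈ Finset.Icc (x + 1) 0, X y

lemma diffS_heightS (X : ℤ → ℤ) : diffS (heightS X) = X := by
  funext x
  simp only [diffS, heightS]
  by_cases hx : 1 ≤ x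
  · have h0 : Finset.Icc (x + 1) 0 = ∅ := Finset.Icc_eq_empty (by omega)
    have h0' : Finset.Icc (x - 1 + 1) 0 = ∅ := Finset.Icc_eq_empty (by omega)
    have hins : Finset.Icc 1 x = insert x (Finset.Icc 1 (x - 1)) := by
      ext y; simp only [Finset.mem_Icc, Finset.mem_insert]; omega
    have hnot : x ∉ Finset.Icc 1 (x - 1) := by simp only [Finset.mem_Icc]; omega
    rw [h0, h0', hins, Finset.sum_insert hnot]
    simp
  · have h1 : Finset.Icc 1 x = ∅ := Finset.Icc_eq_empty (by omega)
    have h1' : Finset.Icc 1 (x - 1) = ∅ := Finset.Icc_eq_empty (by omega)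
    have hins : Finset.Icc (x - 1 + 1) 0 = insert x (Finset.Icc (x + 1) 0) := by
      ext y; simp only [Finset.mem_Icc, Finset.mem_insert]; omega
    have hnot : x ∉ Finset.Icc (x + 1) 0 := by simp only [Finset.mem_Icc]; omega
    rw [h1, h1', hins, Finset.sum_insert hnot]
    simp

lemma const_of_step (f : ℤ → ℤ) (h : ∀ y : ℤ, f (y + 1) = f y) : ∀ y : ℤ, f y = f 0 := by
  intro y
  induction y using Int.induction_on with
  | zero => rfl
  | succ i ih => rw [h]; exact ih
  | pred i ih =>
      have h2 := h (-(i : ℤ) - 1)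
      have e : -(i : ℤ) - 1 + 1 = -(i : ℤ) := by ring
      rw [e] at h2
      rw [← h2]
      exact ih

lemma heightS_per (X : ℤ → ℤ) (n : ℕ) (hper : IsPeriodic (n : ℤ) X) :
    ∀ y : ℤ, heightS X (y + (n : ℤ)) =
      heightS X y + (heightS X ((0 : ℤ) + (n : ℤ)) - heightS X 0) := by
  set S := heightS X with hS
  have hdiff : ∀ z : ℤ, S z - S (z - 1) = X z := by
    intro z
    have := congrFun (diffS_heightS X) z
    simpa [diffS] using this
  set P : ℤ → ℤ := fun y => S (y + (n : ℤ)) - S y with hP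
  have hstep : ∀ y : ℤ, P (y + 1) = P y := by
    intro y
    simp only [hP]
    have h1 := hdiff (y + 1 + (n : ℤ))
    have e : y + 1 + (n : ℤ) - 1 = y + (n : ℤ) := by ring
    rw [e] at h1
    have h2 := hdiff (y + 1)
    have e2 : y + 1 - 1 = y := by ring
    rw [e2] at h2
    have h3 := hper (y + 1)
    omega
  intro y
  have := const_of_step P hstep y
  simp only [hP] at this
  omega

/-- After the transient period (of length at most `n`), the orbit of an
`n`-periodic configuration is `n`-periodic in time. -/
theorem stmt_14 (K : ℤ) (hK : 1 ≤ K) (n : ℕ) (hn : 1 ≤ n) (X : ℤ → ℤ)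
    (hX : IsConf K X) (hper : IsPeriodic (n : ℤ) X) :
    ∀ t : ℕ, n ≤ t → ∀ x : ℤ, (Tmap K)^[t + n] X x = (Tmap K)^[t] X x := by
  intro t ht x
  set S := heightS X with hS
  set m : ℤ := heightS X ((0 : ℤ) + (n : ℤ)) - heightS X 0 with hm
  have hperS : ∀ y : ℤ, S (y + (n : ℤ)) = S y + m := heightS_per X n hper
  have hXd : X = diffS S := (diffS_heightS X).symm
  rw [hXd, Tmap_iter_diff, Tmap_iter_diff]
  simp only [diffS]
  rw [key_lemma K S n m hperS t ht x, key_lemma K S n m hperS t ht (x - 1)]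
  ring
end
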